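/- arXiv:math/0603381 — 2 statements merged into one kernel-verified Lean document; each statement's English description precedes it below -/
import Mathlib

section
/- Let a, b be positive integers and let f(x_1, x_2) = c_1 x_1^a + c_2 x_2^b + g(x_1, x_2) be a formal power series over C with c_1 ≠ 0, c_2 ≠ 0, where every monomial of g has (b,a)-weight strictly greater than ab (the common (b,a)-weight of x_1^a and x_2^b). Then f is irreducible in C[[x_1, x_2]] provided gcd(a,b) = 1. -/
open MvPowerSeries

namespace Stmt5Aux

/-- The `(b,a)`-weight of an exponent. -/
def w (a b : ℕ) (β : Fin 2 →₀ ℕ) : ℕ := b * β 0 + a * β 1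

lemma w_add (a b : ℕ) (β γ : Fin 2 →₀ ℕ) : w a b (β + γ) = w a b β + w a b γ := by
  simp only [w, Finsupp.add_apply]; ring

lemma w_single0 (a b : ℕ) : w a b (Finsupp.single (0 : Fin 2) a) = a * b := by
  simp [w, Finsupp.single_apply, Nat.mul_comm]

lemma w_single1 (a b : ℕ) : w a b (Finsupp.single (1 : Fin 2) b) = a * b := by
  simp [w, Finsupp.single_apply]

lemma w_eq_zero {a b : ℕ} (ha : 0 < a) (hb : 0 < b) {β : Fin 2 →₀ ℕ}
    (h : w a b β = 0) : β = 0 := by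
  have h0 : β 0 = 0 := by
    rcases Nat.mul_eq_zero.mp (Nat.eq_zero_of_add_eq_zero_right h) with h' | h'
    · exact absurd h' hb.ne'
    · exact h'
  have h1 : β 1 = 0 := by
    rcases Nat.mul_eq_zero.mp (Nat.eq_zero_of_add_eq_zero_left h) with h' | h'
    · exact absurd h' ha.ne'
    · exact h'
  ext i
  fin_cases i
  · exact h0
  · exact h1

/-- The set of weights occurring in `p`. -/
def wset (a b : ℕ) (p : MvPowerSeries (Fin 2) ℂ) : Set ℕ :=
  {n | ∃ β, w a b β = n ∧ MvPowerSeries.coeff (R := ℂ) β p ≠ 0}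

/-- The weighted order. -/
noncomputable def ν (a b : ℕ) (p : MvPowerSeries (Fin 2) ℂ) : ℕ := sInf (wset a b p)

lemma exists_w_eq_nu {a b : ℕ} {p : MvPowerSeries (Fin 2) ℂ} (hp : p ≠ 0) :
    ∃ β, w a b β = ν a b p ∧ MvPowerSeries.coeff (R := ℂ) β p ≠ 0 := by
  have hne : (wset a b p).Nonempty := by
    have : ∃ β, MvPowerSeries.coeff (R := ℂ) β p ≠ 0 := by
      by_contra h
      push_neg at h
      exact hp (MvPowerSeries.ext fun n => by simp [h n])
    obtain ⟨β, hβ⟩ := this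
    exact ⟨w a b β, β, rfl, hβ⟩
  exact Nat.sInf_mem hne

lemma nu_le {a b : ℕ} {p : MvPowerSeries (Fin 2) ℂ} {β : Fin 2 →₀ ℕ}
    (h : MvPowerSeries.coeff (R := ℂ) β p ≠ 0) : ν a b p ≤ w a b β :=
  Nat.sInf_le ⟨β, rfl, h⟩

lemma nu_pos {a b : ℕ} (ha : 0 < a) (hb : 0 < b) {p : MvPowerSeries (Fin 2) ℂ}
    (hp : p ≠ 0) (h0 : MvPowerSeries.constantCoeff (σ := Fin 2) (R := ℂ) p = 0) :
    0 < ν a b p := by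
  rcases Nat.eq_zero_or_pos (ν a b p) with h | h
  swap
  · exact h
  · obtain ⟨β, hβw, hβ⟩ := exists_w_eq_nu (a := a) (b := b) hp
    rw [h] at hβw
    have : β = 0 := w_eq_zero ha hb hβw
    rw [this, MvPowerSeries.coeff_zero_eq_constantCoeff] at hβ
    exact absurd h0 hβ

/-- Coefficients of a product vanish below the sum of weighted orders. -/
lemma coeff_mul_eq_zero {a b : ℕ} {p q : MvPowerSeries (Fin 2) ℂ} {β : Fin 2 →₀ ℕ}
    (h : w a b β < ν a b p + ν a b q) :
    MvPowerSeries.coeff (R := ℂ) β (p * q) = 0 := by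
  rw [MvPowerSeries.coeff_mul]
  apply Finset.sum_eq_zero
  rintro ⟨γ, δ⟩ hmem
  rw [Finset.HasAntidiagonal.mem_antidiagonal] at hmem
  by_contra hne
  have hγ : MvPowerSeries.coeff (R := ℂ) γ p ≠ 0 := fun h0 => hne (by simp [h0])
  have hδ : MvPowerSeries.coeff (R := ℂ) δ q ≠ 0 := fun h0 => hne (by simp [h0])
  have h1 : ν a b p ≤ w a b γ := nu_le hγ
  have h2 : ν a b q ≤ w a b δ := nu_le hδ
  have : w a b γ + w a b δ = w a b β := by rw [← w_add, hmem]
  omega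

/-- Multiplicativity of the weighted order: there is a nonzero coefficient of the
product at total weight `ν p + ν q`. -/
lemma exists_coeff_mul_ne_zero {a b : ℕ} (ha : 0 < a) (hb : 0 < b)
    {p q : MvPowerSeries (Fin 2) ℂ} (hp : p ≠ 0) (hq : q ≠ 0) :
    ∃ β, w a b β = ν a b p + ν a b q ∧ MvPowerSeries.coeff (R := ℂ) β (p * q) ≠ 0 := by
  -- choose exponents of minimal weight with maximal first coordinate
  have key : ∀ r : MvPowerSeries (Fin 2) ℂ, r ≠ 0 →
      ∃ β, w a b β = ν a b r ∧ MvPowerSeries.coeff (R := ℂ) β r ≠ 0 ∧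
        ∀ γ, w a b γ = ν a b r → MvPowerSeries.coeff (R := ℂ) γ r ≠ 0 → γ 0 ≤ β 0 := by
    intro r hr
    set S : Set ℕ := {m | ∃ β, w a b β = ν a b r ∧ MvPowerSeries.coeff (R := ℂ) β r ≠ 0 ∧ β 0 = m}
      with hS
    have hSne : S.Nonempty := by
      obtain ⟨β, h1, h2⟩ := exists_w_eq_nu (a := a) (b := b) hr
      exact ⟨β 0, β, h1, h2, rfl⟩
    have hSbdd : BddAbove S := by
      refine ⟨ν a b r, ?_⟩
      rintro m ⟨β, h1, h2, h3⟩
      calc m = β 0 := h3.symm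
        _ ≤ b * β 0 := Nat.le_mul_of_pos_left _ hb
        _ ≤ w a b β := Nat.le_add_right _ _
        _ = ν a b r := h1
    obtain ⟨β, h1, h2, h3⟩ := Nat.sSup_mem hSne hSbdd
    exact ⟨β, h1, h2, fun γ hγw hγ => h3 ▸ le_csSup hSbdd ⟨γ, hγw, hγ, rfl⟩⟩
  obtain ⟨β₁, hw1, hc1, hmax1⟩ := key p hp
  obtain ⟨β₂, hw2, hc2, hmax2⟩ := key q hq
  refine ⟨β₁ + β₂, by rw [w_add, hw1, hw2], ?_⟩
  rw [MvPowerSeries.coeff_mul]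
  have hsingle : ∀ x ∈ Finset.HasAntidiagonal.antidiagonal (β₁ + β₂),
      (MvPowerSeries.coeff (R := ℂ) x.1 p * MvPowerSeries.coeff (R := ℂ) x.2 q ≠ 0) → x = (β₁, β₂) := by
    rintro ⟨γ, δ⟩ hmem hne
    rw [Finset.HasAntidiagonal.mem_antidiagonal] at hmem
    have hγ : MvPowerSeries.coeff (R := ℂ) γ p ≠ 0 := fun h0 => hne (by simp [h0])
    have hδ : MvPowerSeries.coeff (R := ℂ) δ q ≠ 0 := fun h0 => hne (by simp [h0])
    have h1 : ν a b p ≤ w a b γ := nu_le hγ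
    have h2 : ν a b q ≤ w a b δ := nu_le hδ
    have hsum : w a b γ + w a b δ = ν a b p + ν a b q := by
      rw [← w_add, hmem, w_add, hw1, hw2]
    have hwγ : w a b γ = ν a b p := by omega
    have hwδ : w a b δ = ν a b q := by omega
    have hγ0 : γ 0 ≤ β₁ 0 := hmax1 γ hwγ hγ
    have hδ0 : δ 0 ≤ β₂ 0 := hmax2 δ hwδ hδ
    have hadd0 : γ 0 + δ 0 = β₁ 0 + β₂ 0 := by
      have := congrArg (fun s : Fin 2 →₀ ℕ => s 0) hmem
      simpa [Finsupp.add_apply] using this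
    have hγ0' : γ 0 = β₁ 0 := by omega
    have hδ0' : δ 0 = β₂ 0 := by omega
    have hγ1 : γ 1 = β₁ 1 := by
      have e1 : b * γ 0 + a * γ 1 = b * β₁ 0 + a * β₁ 1 := by
        have := hwγ; rw [← hw1] at this; exact this
      rw [hγ0'] at e1
      have : a * γ 1 = a * β₁ 1 := by omega
      exact Nat.eq_of_mul_eq_mul_left ha this
    have hδ1 : δ 1 = β₂ 1 := by
      have e1 : b * δ 0 + a * δ 1 = b * β₂ 0 + a * β₂ 1 := by
        have := hwδ; rw [← hw2] at this; exact this
      rw [hδ0'] at e1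
      have : a * δ 1 = a * β₂ 1 := by omega
      exact Nat.eq_of_mul_eq_mul_left ha this
    have hγeq : γ = β₁ := by
      ext i; fin_cases i
      · exact hγ0'
      · exact hγ1
    have hδeq : δ = β₂ := by
      ext i; fin_cases i
      · exact hδ0'
      · exact hδ1
    simp [hγeq, hδeq]
  have hsum : ∑ x ∈ Finset.HasAntidiagonal.antidiagonal (β₁ + β₂),
      MvPowerSeries.coeff (R := ℂ) x.1 p * MvPowerSeries.coeff (R := ℂ) x.2 q
      = MvPowerSeries.coeff (R := ℂ) β₁ p * MvPowerSeries.coeff (R := ℂ) β₂ q := by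
    apply Finset.sum_eq_single_of_mem (β₁, β₂) (Finset.HasAntidiagonal.mem_antidiagonal.mpr rfl)
    intro x hx hxne
    by_contra hne
    exact hxne (hsingle x hx hne)
  rw [hsum]
  exact mul_ne_zero hc1 hc2

end Stmt5Aux

open Stmt5Aux

/-- Let `f = c₁ x₁^a + c₂ x₂^b + g` in `ℂ[[x₁,x₂]]` with `c₁, c₂ ≠ 0`, where every
monomial of `g` has `(b,a)`-weight strictly greater than `a*b`.  If `gcd(a,b) = 1`
then `f` is irreducible in `ℂ[[x₁,x₂]]`. -/
theorem stmt_5 (a b : ℕ) (ha : 0 < a) (hb : 0 < b) (hab : Nat.gcd a b = 1)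
    (c₁ c₂ : ℂ) (hc₁ : c₁ ≠ 0) (hc₂ : c₂ ≠ 0)
    (g : MvPowerSeries (Fin 2) ℂ)
    (hg : ∀ β : Fin 2 →₀ ℕ, MvPowerSeries.coeff (R := ℂ) β g ≠ 0 → a * b < b * β 0 + a * β 1)
    (f : MvPowerSeries (Fin 2) ℂ)
    (hf : f = MvPowerSeries.C (σ := Fin 2) (R := ℂ) c₁ * (X 0) ^ a
        + MvPowerSeries.C (σ := Fin 2) (R := ℂ) c₂ * (X 1) ^ b + g) :
    Irreducible f := by
  classical
  -- basic coefficient facts about f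
  have hgw : ∀ β : Fin 2 →₀ ℕ, w a b β ≤ a * b → MvPowerSeries.coeff (R := ℂ) β g = 0 := by
    intro β hβ
    by_contra h
    exact absurd hβ (not_le.mpr (hg β h))
  have hne01 : Finsupp.single (0 : Fin 2) a ≠ Finsupp.single (1 : Fin 2) b := by
    intro h
    have := congrArg (fun s : Fin 2 →₀ ℕ => s 0) h
    simp [Finsupp.single_apply] at this
    omega
  have hcoeff : ∀ β : Fin 2 →₀ ℕ, MvPowerSeries.coeff (R := ℂ) β f =
      (if β = Finsupp.single (0 : Fin 2) a then c₁ else 0)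
      + (if β = Finsupp.single (1 : Fin 2) b then c₂ else 0)
      + MvPowerSeries.coeff (R := ℂ) β g := by
    intro β
    rw [hf]
    simp [MvPowerSeries.coeff_X_pow, mul_ite]
  have hfA : MvPowerSeries.coeff (R := ℂ) (Finsupp.single (0 : Fin 2) a) f = c₁ := by
    rw [hcoeff]
    rw [if_pos rfl, if_neg hne01, hgw _ (le_of_eq (w_single0 a b))]
    ring
  have hfB : MvPowerSeries.coeff (R := ℂ) (Finsupp.single (1 : Fin 2) b) f = c₂ := by
    rw [hcoeff]
    rw [if_neg (Ne.symm hne01), if_pos rfl, hgw _ (le_of_eq (w_single1 a b))]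
    ring
  have hflow : ∀ β : Fin 2 →₀ ℕ, w a b β < a * b → MvPowerSeries.coeff (R := ℂ) β f = 0 := by
    intro β hβ
    rw [hcoeff]
    rw [if_neg, if_neg, hgw _ hβ.le]
    · ring
    · intro h; rw [h, w_single1] at hβ; omega
    · intro h; rw [h, w_single0] at hβ; omega
  have hfne : f ≠ 0 := fun h => hc₁ (by rw [← hfA, h, map_zero])
  constructor
  · -- f is not a unit
    rw [MvPowerSeries.isUnit_iff_constantCoeff]
    have : MvPowerSeries.constantCoeff (σ := Fin 2) (R := ℂ) f = 0 := by
      have := hflow 0 (by simpa [w] using Nat.mul_pos ha hb)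
      rwa [MvPowerSeries.coeff_zero_eq_constantCoeff] at this
    rw [this]
    exact not_isUnit_zero
  · rintro p q hpq
    by_contra hcon
    push_neg at hcon
    obtain ⟨hup, huq⟩ := hcon
    have hp0 : MvPowerSeries.constantCoeff (σ := Fin 2) (R := ℂ) p = 0 := by
      by_contra h
      exact hup (MvPowerSeries.isUnit_iff_constantCoeff.mpr (isUnit_iff_ne_zero.mpr h))
    have hq0 : MvPowerSeries.constantCoeff (σ := Fin 2) (R := ℂ) q = 0 := by
      by_contra h
      exact huq (MvPowerSeries.isUnit_iff_constantCoeff.mpr (isUnit_iff_ne_zero.mpr h))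
    have hpne : p ≠ 0 := by rintro rfl; rw [zero_mul] at hpq; exact hfne hpq
    have hqne : q ≠ 0 := by rintro rfl; rw [mul_zero] at hpq; exact hfne hpq
    set s := ν a b p with hs
    set t := ν a b q with ht
    have hspos : 0 < s := nu_pos ha hb hpne hp0
    have htpos : 0 < t := nu_pos ha hb hqne hq0
    -- s + t = a * b
    have hge : a * b ≤ s + t := by
      obtain ⟨β, hβw, hβ⟩ := exists_coeff_mul_ne_zero ha hb hpne hqne
      rw [← hpq] at hβ
      by_contra h
      push_neg at h
      exact hβ (hflow β (hβw ▸ h))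
    have hle : s + t ≤ a * b := by
      by_contra h
      push_neg at h
      have : MvPowerSeries.coeff (R := ℂ) (Finsupp.single (0 : Fin 2) a) (p * q) = 0 :=
        coeff_mul_eq_zero (a := a) (b := b) (by rw [w_single0]; omega)
      rw [← hpq, hfA] at this
      exact hc₁ this
    have hst : s + t = a * b := le_antisymm hle hge
    -- from the coefficient at x^a : b ∣ s
    have hdvd : ∀ (i : Fin 2) (n : ℕ), Finsupp.single i n = n • Finsupp.single i 1 := by
      intro i n; rw [Finsupp.smul_single]; simp
    have hbd : b ∣ s := by
      have hcA : MvPowerSeries.coeff (R := ℂ) (Finsupp.single (0 : Fin 2) a) (p * q) ≠ 0 := by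
        rw [← hpq, hfA]; exact hc₁
      rw [MvPowerSeries.coeff_mul] at hcA
      obtain ⟨x, hxmem, hx⟩ := Finset.exists_ne_zero_of_sum_ne_zero hcA
      obtain ⟨γ, δ⟩ := x
      rw [Finset.HasAntidiagonal.mem_antidiagonal] at hxmem
      have hγ : MvPowerSeries.coeff (R := ℂ) γ p ≠ 0 := fun h0 => hx (by simp [h0])
      have hδ : MvPowerSeries.coeff (R := ℂ) δ q ≠ 0 := fun h0 => hx (by simp [h0])
      have h1 : s ≤ w a b γ := nu_le hγ
      have h2 : t ≤ w a b δ := nu_le hδ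
      have hsum : w a b γ + w a b δ = a * b := by
        rw [← w_add, hxmem, w_single0]
      have hwγ : w a b γ = s := by omega
      have hγ1 : γ 1 = 0 := by
        have := congrArg (fun s : Fin 2 →₀ ℕ => s 1) hxmem
        simp [Finsupp.add_apply, Finsupp.single_apply] at this
        omega
      rw [← hwγ]
      unfold w
      rw [hγ1]
      simpa using dvd_mul_right b (γ 0)
    have had : a ∣ s := by
      have hcB : MvPowerSeries.coeff (R := ℂ) (Finsupp.single (1 : Fin 2) b) (p * q) ≠ 0 := by
        rw [← hpq, hfB]; exact hc₂
      rw [MvPowerSeries.coeff_mul] at hcB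
      obtain ⟨x, hxmem, hx⟩ := Finset.exists_ne_zero_of_sum_ne_zero hcB
      obtain ⟨γ, δ⟩ := x
      rw [Finset.HasAntidiagonal.mem_antidiagonal] at hxmem
      have hγ : MvPowerSeries.coeff (R := ℂ) γ p ≠ 0 := fun h0 => hx (by simp [h0])
      have hδ : MvPowerSeries.coeff (R := ℂ) δ q ≠ 0 := fun h0 => hx (by simp [h0])
      have h1 : s ≤ w a b γ := nu_le hγ
      have h2 : t ≤ w a b δ := nu_le hδ
      have hsum : w a b γ + w a b δ = a * b := by
        rw [← w_add, hxmem, w_single1]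
      have hwγ : w a b γ = s := by omega
      have hγ0 : γ 0 = 0 := by
        have := congrArg (fun s : Fin 2 →₀ ℕ => s 0) hxmem
        simp [Finsupp.add_apply, Finsupp.single_apply] at this
        omega
      rw [← hwγ]
      unfold w
      rw [hγ0]
      simpa using dvd_mul_right a (γ 1)
    have habs : a * b ∣ s := Nat.Coprime.mul_dvd_of_dvd_of_dvd hab had hbd
    have : a * b ≤ s := Nat.le_of_dvd hspos habs
    omega
end

section
/- Let f_1 = x_1^a + x_2^b + g_1 and f_2 = x_1^c + x_2^d + g_2 in C[[x_1, x_2]], where a, b, c, d are positive integers with bc > ad, ρ_{(b,a)}(g_1) > ab, and ρ_{(d,c)}(g_2) > cd. Then f_1 and f_2 are relatively prime in C[[x_1, x_2]] (they have no common irreducible factor). -/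
open MvPowerSeries

/-- Weighted degree `p * β i + r * β j` on exponents. -/
private def wdeg6 (p r : ℕ) (i j : Fin 2) (β : Fin 2 →₀ ℕ) : ℕ := p * β i + r * β j

private lemma wdeg6_add (p r : ℕ) (i j : Fin 2) (γ δ : Fin 2 →₀ ℕ) :
    wdeg6 p r i j (γ + δ) = wdeg6 p r i j γ + wdeg6 p r i j δ := by
  simp only [wdeg6, Finsupp.add_apply]; ring

private lemma wdeg6_single (p r A : ℕ) (i j : Fin 2) (hij : i ≠ j) :
    wdeg6 p r i j (Finsupp.single i A) = p * A := by
  simp [wdeg6, Finsupp.single_eq_same, Finsupp.single_eq_of_ne' hij]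

/-- The weighted order: the infimum of the weighted degrees on the support. -/
private noncomputable def rho6 (p r : ℕ) (i j : Fin 2) (F : MvPowerSeries (Fin 2) ℂ) : ℕ :=
  sInf {k | ∃ β, MvPowerSeries.coeff β F ≠ 0 ∧ wdeg6 p r i j β = k}

private lemma rho6_le (p r : ℕ) (i j : Fin 2) (F : MvPowerSeries (Fin 2) ℂ)
    (β : Fin 2 →₀ ℕ) (hβ : MvPowerSeries.coeff β F ≠ 0) :
    rho6 p r i j F ≤ wdeg6 p r i j β :=
  Nat.sInf_le ⟨β, hβ, rfl⟩

private lemma rho6_mem (p r : ℕ) (i j : Fin 2) (F : MvPowerSeries (Fin 2) ℂ) (hF : F ≠ 0) :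
    ∃ β, MvPowerSeries.coeff β F ≠ 0 ∧ wdeg6 p r i j β = rho6 p r i j F := by
  have hne : {k | ∃ β, MvPowerSeries.coeff β F ≠ 0 ∧ wdeg6 p r i j β = k}.Nonempty := by
    by_contra hc
    apply hF
    apply MvPowerSeries.ext
    intro β
    by_contra hβ
    exact hc ⟨wdeg6 p r i j β, β, hβ, rfl⟩
  exact Nat.sInf_mem hne

/-- The weighted leading form. -/
private noncomputable def lead6 (p r : ℕ) (i j : Fin 2) (F : MvPowerSeries (Fin 2) ℂ) :
    MvPowerSeries (Fin 2) ℂ :=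
  fun β => if wdeg6 p r i j β = rho6 p r i j F then MvPowerSeries.coeff β F else 0

private lemma coeff_lead6 (p r : ℕ) (i j : Fin 2) (F : MvPowerSeries (Fin 2) ℂ)
    (β : Fin 2 →₀ ℕ) :
    MvPowerSeries.coeff β (lead6 p r i j F) =
      if wdeg6 p r i j β = rho6 p r i j F then MvPowerSeries.coeff β F else 0 := rfl

private lemma lead6_ne_zero (p r : ℕ) (i j : Fin 2) (F : MvPowerSeries (Fin 2) ℂ)
    (hF : F ≠ 0) : lead6 p r i j F ≠ 0 := by
  obtain ⟨β, hβ, hw⟩ := rho6_mem p r i j F hF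
  intro hc
  apply hβ
  have := congrArg (MvPowerSeries.coeff β) hc
  rwa [coeff_lead6, if_pos hw, map_zero] at this

/-- Below the sum of the weighted orders, all coefficients of a product vanish. -/
private lemma coeff_mul_low (p r : ℕ) (i j : Fin 2) (q h : MvPowerSeries (Fin 2) ℂ)
    (β : Fin 2 →₀ ℕ) (hβ : wdeg6 p r i j β < rho6 p r i j q + rho6 p r i j h) :
    MvPowerSeries.coeff β (q * h) = 0 := by
  classical
  rw [MvPowerSeries.coeff_mul]
  apply Finset.sum_eq_zero
  rintro ⟨γ, δ⟩ hmem
  rw [Finset.HasAntidiagonal.mem_antidiagonal] at hmem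
  by_contra hne
  have h1 := rho6_le p r i j q γ (left_ne_zero_of_mul hne)
  have h2 := rho6_le p r i j h δ (right_ne_zero_of_mul hne)
  have h3 : wdeg6 p r i j γ + wdeg6 p r i j δ = wdeg6 p r i j β := by
    rw [← wdeg6_add, hmem]
  omega

/-- At the sum of the weighted orders, the coefficients of a product agree with
those of the product of the leading forms. -/
private lemma coeff_mul_lead (p r : ℕ) (i j : Fin 2) (q h : MvPowerSeries (Fin 2) ℂ)
    (β : Fin 2 →₀ ℕ) (hβ : wdeg6 p r i j β = rho6 p r i j q + rho6 p r i j h) :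
    MvPowerSeries.coeff β (lead6 p r i j q * lead6 p r i j h) =
      MvPowerSeries.coeff β (q * h) := by
  classical
  rw [MvPowerSeries.coeff_mul, MvPowerSeries.coeff_mul]
  apply Finset.sum_congr rfl
  rintro ⟨γ, δ⟩ hmem
  rw [Finset.HasAntidiagonal.mem_antidiagonal] at hmem
  have h3 : wdeg6 p r i j γ + wdeg6 p r i j δ = wdeg6 p r i j β := by
    rw [← wdeg6_add, hmem]
  dsimp only
  rw [coeff_lead6, coeff_lead6]
  by_cases h1 : wdeg6 p r i j γ = rho6 p r i j q
  · by_cases h2 : wdeg6 p r i j δ = rho6 p r i j h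
    · rw [if_pos h1, if_pos h2]
    · rw [if_pos h1, if_neg h2]
      by_cases h4 : MvPowerSeries.coeff δ h = 0
      · simp [h4]
      · exact absurd (by have := rho6_le p r i j h δ h4; omega) h2
  · rw [if_neg h1, zero_mul]
    by_cases h4 : MvPowerSeries.coeff γ q = 0
    · rw [h4, zero_mul]
    · have h5 : rho6 p r i j q < wdeg6 p r i j γ :=
        lt_of_le_of_ne (rho6_le p r i j q γ h4) (Ne.symm h1)
      have h6 : MvPowerSeries.coeff δ h = 0 := by
        by_contra h7
        have := rho6_le p r i j h δ h7
        omega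
      rw [h6, mul_zero]

/-- Key lemma: if `q * h = f`, where `f` has weighted order `p * A` with leading
form having coefficient `1` on the pure monomial `x_i ^ A`, then the leading form
of `q` contains a pure monomial `x_i ^ m`. -/
private lemma key6 (p r A : ℕ) (i j : Fin 2) (hij : i ≠ j)
    (q h f : MvPowerSeries (Fin 2) ℂ) (hq : q ≠ 0) (hh : h ≠ 0) (hf : q * h = f)
    (hlow : ∀ β : Fin 2 →₀ ℕ, p * β i + r * β j < p * A → MvPowerSeries.coeff β f = 0)
    (hpure : MvPowerSeries.coeff (Finsupp.single i A) f = 1) :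
    ∃ m : ℕ, MvPowerSeries.coeff (Finsupp.single i m) q ≠ 0 ∧
      ∀ β : Fin 2 →₀ ℕ, MvPowerSeries.coeff β q ≠ 0 → p * m ≤ p * β i + r * β j := by
  classical
  -- the sum of the orders is `p * A`
  have hle : rho6 p r i j q + rho6 p r i j h ≤ p * A := by
    by_contra hc
    have := coeff_mul_low p r i j q h (Finsupp.single i A)
      (by rw [wdeg6_single p r A i j hij]; omega)
    rw [hf, hpure] at this
    exact one_ne_zero this
  have hge : p * A ≤ rho6 p r i j q + rho6 p r i j h := by
    have hP : lead6 p r i j q * lead6 p r i j h ≠ 0 :=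
      mul_ne_zero (lead6_ne_zero p r i j q hq) (lead6_ne_zero p r i j h hh)
    have hex : ∃ β, MvPowerSeries.coeff β (lead6 p r i j q * lead6 p r i j h) ≠ 0 := by
      by_contra hc; push_neg at hc; exact hP (MvPowerSeries.ext hc)
    obtain ⟨β, hβ⟩ := hex
    -- the weight of β is the sum of the orders
    have hw : wdeg6 p r i j β = rho6 p r i j q + rho6 p r i j h := by
      rw [MvPowerSeries.coeff_mul] at hβ
      obtain ⟨⟨γ, δ⟩, hmem, hne⟩ := Finset.exists_ne_zero_of_sum_ne_zero hβ
      rw [Finset.HasAntidiagonal.mem_antidiagonal] at hmem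
      have h1 := left_ne_zero_of_mul hne
      have h2 := right_ne_zero_of_mul hne
      rw [coeff_lead6] at h1 h2
      have h1' : wdeg6 p r i j γ = rho6 p r i j q := by
        by_contra hc; rw [if_neg hc] at h1; exact h1 rfl
      have h2' : wdeg6 p r i j δ = rho6 p r i j h := by
        by_contra hc; rw [if_neg hc] at h2; exact h2 rfl
      rw [← hmem, wdeg6_add, h1', h2']
    rw [coeff_mul_lead p r i j q h β hw, hf] at hβ
    by_contra hc
    exact hβ (hlow β (by have := hw; unfold wdeg6 at this; omega))
  have heq : rho6 p r i j q + rho6 p r i j h = p * A := le_antisymm hle hge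
  -- now find the pure monomial in the leading form of q
  have hexm : ∃ m : ℕ, MvPowerSeries.coeff (Finsupp.single i m) q ≠ 0 ∧
      p * m = rho6 p r i j q := by
    by_contra hcon
    push_neg at hcon
    have hz : MvPowerSeries.coeff (Finsupp.single i A)
        (lead6 p r i j q * lead6 p r i j h) = 0 := by
      rw [MvPowerSeries.coeff_mul]
      apply Finset.sum_eq_zero
      rintro ⟨γ, δ⟩ hmem
      rw [Finset.HasAntidiagonal.mem_antidiagonal] at hmem
      dsimp only
      have hγj : γ j = 0 := by
        have : γ j + δ j = (Finsupp.single i A) j := by rw [← Finsupp.add_apply, hmem]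
        rw [Finsupp.single_eq_of_ne' hij] at this
        omega
      have hγ : γ = Finsupp.single i (γ i) := by
        ext k
        have hk : k = i ∨ k = j := by omega
        rcases hk with rfl | rfl
        · rw [Finsupp.single_eq_same]
        · rw [Finsupp.single_eq_of_ne' hij, hγj]
      by_contra hne
      have h1 := left_ne_zero_of_mul hne
      rw [coeff_lead6] at h1
      have h1' : wdeg6 p r i j γ = rho6 p r i j q := by
        by_contra hc; rw [if_neg hc] at h1; exact h1 rfl
      rw [if_pos h1'] at h1
      apply hcon (γ i) (hγ ▸ h1)
      rw [← h1']
      unfold wdeg6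
      rw [hγj]
      ring
    rw [coeff_mul_lead p r i j q h _ (by rw [wdeg6_single p r A i j hij, heq]), hf,
      hpure] at hz
    exact one_ne_zero hz
  obtain ⟨m, hm1, hm2⟩ := hexm
  refine ⟨m, hm1, fun β hβ => ?_⟩
  have := rho6_le p r i j q β hβ
  unfold wdeg6 at this
  omega

/-- Let `f₁ = x₁^a + x₂^b + g₁` and `f₂ = x₁^c + x₂^d + g₂` in `ℂ[[x₁,x₂]]` with
`bc > ad`, `ρ_{(b,a)}(g₁) > ab` and `ρ_{(d,c)}(g₂) > cd`.  Then `f₁` and `f₂` have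
no common irreducible factor. -/
theorem stmt_6 (a b c d : ℕ) (ha : 0 < a) (hb : 0 < b) (hc : 0 < c) (hd : 0 < d)
    (hbcad : a * d < b * c)
    (g₁ g₂ : MvPowerSeries (Fin 2) ℂ)
    (hg₁ : ∀ β : Fin 2 →₀ ℕ, MvPowerSeries.coeff β g₁ ≠ 0 → a * b < b * β 0 + a * β 1)
    (hg₂ : ∀ β : Fin 2 →₀ ℕ, MvPowerSeries.coeff β g₂ ≠ 0 → c * d < d * β 0 + c * β 1)
    (f₁ f₂ : MvPowerSeries (Fin 2) ℂ)
    (hf₁ : f₁ = (X 0) ^ a + (X 1) ^ b + g₁)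
    (hf₂ : f₂ = (X 0) ^ c + (X 1) ^ d + g₂) :
    ∀ q : MvPowerSeries (Fin 2) ℂ, Irreducible q → q ∣ f₁ → ¬ q ∣ f₂ := by
  classical
  intro q hirr ⟨h₁, hqh₁⟩ ⟨h₂, hqh₂⟩
  have h01 : (0 : Fin 2) ≠ 1 := by omega
  have h10 : (1 : Fin 2) ≠ 0 := by omega
  -- coefficients of f₁ and f₂
  have hcoeff₁ : ∀ β : Fin 2 →₀ ℕ, MvPowerSeries.coeff β f₁ =
      (if β = Finsupp.single 0 a then 1 else 0) + (if β = Finsupp.single 1 b then 1 else 0)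
        + MvPowerSeries.coeff β g₁ := by
    intro β
    rw [hf₁, map_add, map_add, MvPowerSeries.coeff_X_pow, MvPowerSeries.coeff_X_pow]
  have hcoeff₂ : ∀ β : Fin 2 →₀ ℕ, MvPowerSeries.coeff β f₂ =
      (if β = Finsupp.single 0 c then 1 else 0) + (if β = Finsupp.single 1 d then 1 else 0)
        + MvPowerSeries.coeff β g₂ := by
    intro β
    rw [hf₂, map_add, map_add, MvPowerSeries.coeff_X_pow, MvPowerSeries.coeff_X_pow]
  have hsingle₀ : ∀ n m : ℕ, (Finsupp.single (0 : Fin 2) n : Fin 2 →₀ ℕ) 0 = n ∧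
      (Finsupp.single (0 : Fin 2) n : Fin 2 →₀ ℕ) 1 = 0 ∧
      (Finsupp.single (1 : Fin 2) m : Fin 2 →₀ ℕ) 0 = 0 ∧
      (Finsupp.single (1 : Fin 2) m : Fin 2 →₀ ℕ) 1 = m := by
    intro n m
    refine ⟨Finsupp.single_eq_same, Finsupp.single_eq_of_ne' h01, Finsupp.single_eq_of_ne' h10,
      Finsupp.single_eq_same⟩
  have hne_sing : ∀ u v : ℕ, 0 < u → 0 < v →
      (Finsupp.single (0 : Fin 2) u : Fin 2 →₀ ℕ) ≠ Finsupp.single (1 : Fin 2) v := by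
    intro u v hu hv hcon
    rw [Finsupp.single_eq_single_iff] at hcon
    rcases hcon with ⟨h, -⟩ | ⟨h, -⟩
    · exact h01 h
    · omega
  -- low and pure facts for f₁ with weights (b, a)
  have hlow₁ : ∀ β : Fin 2 →₀ ℕ, b * β 0 + a * β 1 < b * a →
      MvPowerSeries.coeff β f₁ = 0 := by
    intro β hβ
    rw [hcoeff₁ β]
    obtain ⟨e1, e2, e3, e4⟩ := hsingle₀ a b
    rw [if_neg, if_neg]
    · have : MvPowerSeries.coeff β g₁ = 0 := by
        by_contra hg
        have := hg₁ β hg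
        nlinarith [mul_comm a b]
      rw [this]; ring
    · rintro rfl; rw [e3, e4] at hβ; nlinarith [mul_comm a b]
    · rintro rfl; rw [e1, e2] at hβ; omega
  have hpure₁₀ : MvPowerSeries.coeff (Finsupp.single 0 a) f₁ = 1 := by
    rw [hcoeff₁]
    obtain ⟨e1, e2, e3, e4⟩ := hsingle₀ a b
    rw [if_pos rfl, if_neg (hne_sing a b ha hb)]
    have : MvPowerSeries.coeff (Finsupp.single 0 a) g₁ = 0 := by
      by_contra hg
      have := hg₁ _ hg
      rw [e1, e2] at this
      nlinarith [mul_comm a b]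
    rw [this]; ring
  have hpure₁₁ : MvPowerSeries.coeff (Finsupp.single 1 b) f₁ = 1 := by
    rw [hcoeff₁]
    obtain ⟨e1, e2, e3, e4⟩ := hsingle₀ a b
    rw [if_neg (Ne.symm (hne_sing a b ha hb)), if_pos rfl]
    have : MvPowerSeries.coeff (Finsupp.single 1 b) g₁ = 0 := by
      by_contra hg
      have := hg₁ _ hg
      rw [e3, e4] at this
      nlinarith [mul_comm a b]
    rw [this]; ring
  -- low and pure facts for f₂ with weights (d, c)
  have hlow₂ : ∀ β : Fin 2 →₀ ℕ, d * β 0 + c * β 1 < d * c →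
      MvPowerSeries.coeff β f₂ = 0 := by
    intro β hβ
    rw [hcoeff₂ β]
    obtain ⟨e1, e2, e3, e4⟩ := hsingle₀ c d
    rw [if_neg, if_neg]
    · have : MvPowerSeries.coeff β g₂ = 0 := by
        by_contra hg
        have := hg₂ β hg
        nlinarith [mul_comm c d]
      rw [this]; ring
    · rintro rfl; rw [e3, e4] at hβ; nlinarith [mul_comm c d]
    · rintro rfl; rw [e1, e2] at hβ; omega
  have hpure₂₀ : MvPowerSeries.coeff (Finsupp.single 0 c) f₂ = 1 := by
    rw [hcoeff₂]
    obtain ⟨e1, e2, e3, e4⟩ := hsingle₀ c d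
    rw [if_pos rfl, if_neg (hne_sing c d hc hd)]
    have : MvPowerSeries.coeff (Finsupp.single 0 c) g₂ = 0 := by
      by_contra hg
      have := hg₂ _ hg
      rw [e1, e2] at this
      nlinarith [mul_comm c d]
    rw [this]; ring
  have hpure₂₁ : MvPowerSeries.coeff (Finsupp.single 1 d) f₂ = 1 := by
    rw [hcoeff₂]
    obtain ⟨e1, e2, e3, e4⟩ := hsingle₀ c d
    rw [if_neg (Ne.symm (hne_sing c d hc hd)), if_pos rfl]
    have : MvPowerSeries.coeff (Finsupp.single 1 d) g₂ = 0 := by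
      by_contra hg
      have := hg₂ _ hg
      rw [e3, e4] at this
      nlinarith [mul_comm c d]
    rw [this]; ring
  -- nonvanishing
  have hqne : q ≠ 0 := hirr.ne_zero
  have hf₁ne : f₁ ≠ 0 := by
    intro hcon; rw [hcon, map_zero] at hpure₁₀; exact one_ne_zero hpure₁₀.symm
  have hf₂ne : f₂ ≠ 0 := by
    intro hcon; rw [hcon, map_zero] at hpure₂₀; exact one_ne_zero hpure₂₀.symm
  have hh₁ne : h₁ ≠ 0 := by rintro rfl; rw [mul_zero] at hqh₁; exact hf₁ne hqh₁
  have hh₂ne : h₂ ≠ 0 := by rintro rfl; rw [mul_zero] at hqh₂; exact hf₂ne hqh₂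
  -- four applications of the key lemma
  obtain ⟨m, hm, hmle⟩ := key6 b a a 0 1 h01 q h₁ f₁ hqne hh₁ne hqh₁.symm hlow₁ hpure₁₀
  obtain ⟨n, hn, hnle⟩ := key6 a b b 1 0 h10 q h₁ f₁ hqne hh₁ne hqh₁.symm
    (fun β hβ => hlow₁ β (by rw [mul_comm b a]; omega)) hpure₁₁
  obtain ⟨m', hm', hmle'⟩ := key6 d c c 0 1 h01 q h₂ f₂ hqne hh₂ne hqh₂.symm hlow₂ hpure₂₀
  obtain ⟨n', hn', hnle'⟩ := key6 c d d 1 0 h10 q h₂ f₂ hqne hh₂ne hqh₂.symm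
    (fun β hβ => hlow₂ β (by rw [mul_comm d c]; omega)) hpure₂₁
  -- extract the numeric relations
  obtain ⟨e1, e2, e3, e4⟩ := hsingle₀ m n
  obtain ⟨e1p, e2p, e3p, e4p⟩ := hsingle₀ m' n'
  have r1 := hmle _ hn
  have r2 := hnle _ hm
  have r3 := hmle' _ hn'
  have r4 := hnle' _ hm'
  have r5 := hmle _ hm'
  have r6 := hmle' _ hm
  have r7 := hnle _ hn'
  have r8 := hnle' _ hn
  rw [e3, e4] at r1 r8
  rw [e1, e2] at r2 r6
  rw [e3p, e4p] at r3 r7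
  rw [e1p, e2p] at r4 r5
  have r5' : b * m ≤ b * m' := by omega
  have r6' : d * m' ≤ d * m := by omega
  have r7' : a * n ≤ a * n' := by omega
  have r8' : c * n' ≤ c * n := by omega
  have hmm' : m = m' :=
    le_antisymm (Nat.le_of_mul_le_mul_left r5' hb) (Nat.le_of_mul_le_mul_left r6' hd)
  have hnn' : n = n' :=
    le_antisymm (Nat.le_of_mul_le_mul_left r7' ha) (Nat.le_of_mul_le_mul_left r8' hc)
  have hban : b * m = a * n := by omega
  have hdcn : d * m = c * n := by rw [hmm', hnn']; omega
  have hkey : b * c * m = a * d * m := by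
    calc b * c * m = c * (b * m) := by ring
    _ = c * (a * n) := by rw [hban]
    _ = a * (c * n) := by ring
    _ = a * (d * m) := by rw [hdcn]
    _ = a * d * m := by ring
  have hm0 : m = 0 := by
    by_contra hmne
    have hmpos : 0 < m := Nat.pos_of_ne_zero hmne
    have := Nat.mul_lt_mul_of_pos_right hbcad hmpos
    omega
  -- hence q has nonzero constant coefficient, so q is a unit: contradiction
  have h0 : (Finsupp.single (0 : Fin 2) m : Fin 2 →₀ ℕ) = 0 := by
    rw [hm0, Finsupp.single_zero]
  rw [h0, MvPowerSeries.coeff_zero_eq_constantCoeff] at hm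
  exact hirr.not_isUnit (MvPowerSeries.isUnit_iff_constantCoeff.mpr (isUnit_iff_ne_zero.mpr hm))
end
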